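/- For a finite-dimensional version of Moser's formula: let h_1, …, h_n be C¹ functions on the torus T^n satisfying ∂h_k/∂φ_j = ∂h_j/∂φ_k for all j,k and having zero average over T^n. Then the function f = Σ_{l=1}^n M_1⋯M_{l−1} L_l h_l satisfies ∂f/∂φ_j = h_j for all j, where M_j is averaging in the j-th angle and L_j g(φ) = (2π)^{-1} ∫_0^{2π} t g(φ_1,…,φ_{j−1}, φ_j + t, φ_{j+1},…,φ_n) dt. -/

import Mathlib

open scoped Real
open Function intervalIntegral

noncomputable section

variable {n : ℕ}

/-- Averaging in the `j`-th angle: `M_j g(φ) = (2π)⁻¹ ∫₀^{2π} g(…, φ_j + t, …) dt`. -/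
def Mav (j : Fin n) (g : (Fin n → ℝ) → ℝ) (φ : Fin n → ℝ) : ℝ :=
  (2 * π)⁻¹ * ∫ t in (0)..(2 * π), g (update φ j (φ j + t))

/-- The operator `L_j g(φ) = (2π)⁻¹ ∫₀^{2π} t g(…, φ_j + t, …) dt`. -/
def Lav (j : Fin n) (g : (Fin n → ℝ) → ℝ) (φ : Fin n → ℝ) : ℝ :=
  (2 * π)⁻¹ * ∫ t in (0)..(2 * π), t * g (update φ j (φ j + t))

/-- Iterated averaging over a list of angles. -/
def Mfold (l : List (Fin n)) (g : (Fin n → ℝ) → ℝ) : (Fin n → ℝ) → ℝ :=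
  l.foldr Mav g

/-- The angle derivative `∂g/∂φ_j`. -/
def aD (j : Fin n) (g : (Fin n → ℝ) → ℝ) (φ : Fin n → ℝ) : ℝ :=
  deriv (fun t => g (update φ j (φ j + t))) 0

namespace MoserAux

open MeasureTheory Metric

/-- The `j`-th basis vector. -/
def e (j : Fin n) : Fin n → ℝ := Pi.single j 1

lemma updeq (φ : Fin n → ℝ) (j : Fin n) (t : ℝ) :
    update φ j (φ j + t) = φ + t • e j := by
  funext k
  by_cases hk : k = j
  · subst hk; simp [e]
  · simp [e, update_of_ne hk, Pi.single_eq_of_ne hk]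

/-- The generic weighted averaging operator. -/
def T (w : ℝ → ℝ) (j : Fin n) (g : (Fin n → ℝ) → ℝ) (φ : Fin n → ℝ) : ℝ :=
  (2 * π)⁻¹ * ∫ t in (0:ℝ)..(2 * π), w t * g (φ + t • e j)

lemma Mav_eq_T (j : Fin n) (g : (Fin n → ℝ) → ℝ) : Mav j g = T (fun _ => 1) j g := by
  funext φ; simp [Mav, T, updeq]

lemma Lav_eq_T (j : Fin n) (g : (Fin n → ℝ) → ℝ) : Lav j g = T id j g := by
  funext φ; simp [Lav, T, updeq]

lemma cont_line (j : Fin n) (φ : Fin n → ℝ) :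
    Continuous (fun t : ℝ => φ + t • e j) :=
  continuous_const.add (continuous_id.smul continuous_const)

lemma line_hasDerivAt {g : (Fin n → ℝ) → ℝ} (hg : Differentiable ℝ g)
    (φ : Fin n → ℝ) (j : Fin n) (t : ℝ) :
    HasDerivAt (fun s => g (φ + s • e j)) (fderiv ℝ g (φ + t • e j) (e j)) t := by
  have h1 : HasDerivAt (fun s : ℝ => φ + s • e j) (e j) t := by
    simpa using ((hasDerivAt_id t).smul_const (e j)).const_add φ
  exact (hg (φ + t • e j)).hasFDerivAt.comp_hasDerivAt t h1

lemma aD_eq {g : (Fin n → ℝ) → ℝ} (hg : Differentiable ℝ g) (j : Fin n) (φ : Fin n → ℝ) :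
    aD j g φ = fderiv ℝ g φ (e j) := by
  have heq : (fun t : ℝ => g (update φ j (φ j + t))) = fun t => g (φ + t • e j) :=
    funext fun t => by rw [updeq]
  rw [aD, heq]
  have h := line_hasDerivAt hg φ j 0
  simp only [zero_smul, add_zero] at h
  exact h.deriv

lemma aD_hasDerivAt {g : (Fin n → ℝ) → ℝ} (hg : Differentiable ℝ g) (j : Fin n) (φ : Fin n → ℝ) :
    HasDerivAt (fun t => g (update φ j (φ j + t))) (aD j g φ) 0 := by
  have heq : (fun t : ℝ => g (update φ j (φ j + t))) = fun t => g (φ + t • e j) :=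
    funext fun t => by rw [updeq]
  rw [aD_eq hg, heq]
  have h := line_hasDerivAt hg φ j 0
  simpa using h

lemma T_hasFDerivAt {w : ℝ → ℝ} (hw : Continuous w) {g : (Fin n → ℝ) → ℝ}
    (hg : ContDiff ℝ 1 g) (j : Fin n) (φ : Fin n → ℝ) :
    HasFDerivAt (T w j g)
      ((2 * π)⁻¹ • ∫ t in (0:ℝ)..(2 * π), w t • fderiv ℝ g (φ + t • e j)) φ := by
  have hgd : Differentiable ℝ g := hg.differentiable one_ne_zero
  have hfd : Continuous (fderiv ℝ g) := hg.continuous_fderiv one_ne_zero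
  have h2π : (0:ℝ) ≤ 2 * π := by positivity
  set K : Set (Fin n → ℝ) :=
    (fun p : (Fin n → ℝ) × ℝ => p.1 + p.2 • e j) '' (closedBall φ 1 ×ˢ Set.Icc 0 (2 * π)) with hKdef
  have hKc : IsCompact K :=
    ((isCompact_closedBall φ 1).prod isCompact_Icc).image
      (continuous_fst.add (continuous_snd.smul continuous_const))
  obtain ⟨C, hC⟩ := hKc.exists_bound_of_continuousOn hfd.continuousOn
  obtain ⟨Cw, hCw⟩ :=
    (isCompact_Icc : IsCompact (Set.Icc (0:ℝ) (2 * π))).exists_bound_of_continuousOn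
      hw.continuousOn
  have hCw0 : 0 ≤ Cw := le_trans (norm_nonneg _) (hCw 0 ⟨le_refl 0, h2π⟩)
  have key : HasFDerivAt (fun x => ∫ t in (0:ℝ)..(2 * π), w t * g (x + t • e j))
      (∫ t in (0:ℝ)..(2 * π), w t • fderiv ℝ g (φ + t • e j)) φ := by
    apply intervalIntegral.hasFDerivAt_integral_of_dominated_of_fderiv_le
      (F' := fun x t => w t • fderiv ℝ g (x + t • e j)) (bound := fun _ => Cw * C)
      (s := ball φ 1) (ball_mem_nhds φ one_pos)
    · exact Filter.Eventually.of_forall fun x =>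
        ((hw.mul (hg.continuous.comp (cont_line j x)))).aestronglyMeasurable
    · exact (hw.mul (hg.continuous.comp (cont_line j φ))).intervalIntegrable _ _
    · exact (hw.smul (hfd.comp (cont_line j φ))).aestronglyMeasurable
    · refine Filter.Eventually.of_forall fun t ht x hx => ?_
      have htI : t ∈ Set.Icc (0:ℝ) (2 * π) := by
        rw [Set.uIoc_of_le h2π] at ht; exact ⟨ht.1.le, ht.2⟩
      have hmem : x + t • e j ∈ K := ⟨(x, t), ⟨ball_subset_closedBall hx, htI⟩, rfl⟩
      calc ‖w t • fderiv ℝ g (x + t • e j)‖ = ‖w t‖ * ‖fderiv ℝ g (x + t • e j)‖ :=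
            norm_smul _ _
        _ ≤ Cw * C := mul_le_mul (hCw t htI) (hC _ hmem) (norm_nonneg _) hCw0
    · exact intervalIntegrable_const
    · refine Filter.Eventually.of_forall fun t ht x hx => ?_
      have h0 : HasFDerivAt (fun y : Fin n → ℝ => y + t • e j)
          (ContinuousLinearMap.id ℝ (Fin n → ℝ)) x := by
        simpa using (hasFDerivAt_id (𝕜 := ℝ) x).add_const (t • e j)
      have h1 : HasFDerivAt (fun y : Fin n → ℝ => g (y + t • e j))
          (fderiv ℝ g (x + t • e j)) x := by
        simpa [Function.comp_def] using (hgd (x + t • e j)).hasFDerivAt.comp x h0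
      exact h1.const_mul (w t)
  exact key.const_mul ((2 * π)⁻¹)

lemma T_contDiff {w : ℝ → ℝ} (hw : Continuous w) {g : (Fin n → ℝ) → ℝ}
    (hg : ContDiff ℝ 1 g) (j : Fin n) : ContDiff ℝ 1 (T w j g) := by
  have hfd : Continuous (fderiv ℝ g) := hg.continuous_fderiv one_ne_zero
  rw [contDiff_one_iff_fderiv]
  refine ⟨fun x => (T_hasFDerivAt hw hg j x).differentiableAt, ?_⟩
  have hE : (fderiv ℝ (T w j g)) =
      fun φ => (2 * π)⁻¹ • ∫ t in (0:ℝ)..(2 * π), w t • fderiv ℝ g (φ + t • e j) :=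
    funext fun φ => (T_hasFDerivAt hw hg j φ).fderiv
  rw [hE]
  apply Continuous.fun_const_smul
  apply intervalIntegral.continuous_parametric_intervalIntegral_of_continuous' (μ := volume)
  exact (hw.comp continuous_snd).smul
    (hfd.comp (continuous_fst.add (continuous_snd.smul continuous_const)))

lemma aD_T {w : ℝ → ℝ} (hw : Continuous w) {g : (Fin n → ℝ) → ℝ}
    (hg : ContDiff ℝ 1 g) (i j : Fin n) (φ : Fin n → ℝ) :
    aD i (T w j g) φ = T w j (aD i g) φ := by
  have hfd : Continuous (fderiv ℝ g) := hg.continuous_fderiv one_ne_zero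
  have hTd : Differentiable ℝ (T w j g) :=
    fun x => (T_hasFDerivAt hw hg j x).differentiableAt
  have hInt : IntervalIntegrable (fun t => w t • fderiv ℝ g (φ + t • e j))
      MeasureTheory.volume 0 (2 * π) :=
    (hw.smul (hfd.comp (cont_line j φ))).intervalIntegrable _ _
  rw [aD_eq hTd, (T_hasFDerivAt hw hg j φ).fderiv, ContinuousLinearMap.smul_apply,
    ContinuousLinearMap.intervalIntegral_apply hInt]
  rw [T, smul_eq_mul]
  congr 1
  apply intervalIntegral.integral_congr
  intro t ht
  show (w t • fderiv ℝ g (φ + t • e j)) (e i) = w t * aD i g (φ + t • e j)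
  rw [aD_eq (hg.differentiable one_ne_zero)]
  simp

lemma Mav_contDiff {g : (Fin n → ℝ) → ℝ} (hg : ContDiff ℝ 1 g) (j : Fin n) :
    ContDiff ℝ 1 (Mav j g) := by
  rw [Mav_eq_T]; exact T_contDiff continuous_const hg j

lemma Lav_contDiff {g : (Fin n → ℝ) → ℝ} (hg : ContDiff ℝ 1 g) (j : Fin n) :
    ContDiff ℝ 1 (Lav j g) := by
  rw [Lav_eq_T]; exact T_contDiff continuous_id hg j

lemma aD_Mav {g : (Fin n → ℝ) → ℝ} (hg : ContDiff ℝ 1 g) (i j : Fin n) (φ : Fin n → ℝ) :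
    aD i (Mav j g) φ = Mav j (aD i g) φ := by
  rw [Mav_eq_T, Mav_eq_T, aD_T continuous_const hg]

lemma aD_Lav {g : (Fin n → ℝ) → ℝ} (hg : ContDiff ℝ 1 g) (i j : Fin n) (φ : Fin n → ℝ) :
    aD i (Lav j g) φ = Lav j (aD i g) φ := by
  rw [Lav_eq_T, Lav_eq_T, aD_T continuous_id hg]

lemma Mav_line (j : Fin n) (g : (Fin n → ℝ) → ℝ) (φ : Fin n → ℝ) :
    Mav j g φ = (2 * π)⁻¹ * ∫ t in (0:ℝ)..(2 * π), g (φ + t • e j) := by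
  simp [Mav, updeq]

lemma Mav_sub {F G : (Fin n → ℝ) → ℝ} (hF : Continuous F) (hG : Continuous G)
    (k : Fin n) (φ : Fin n → ℝ) :
    Mav k (fun ψ => F ψ - G ψ) φ = Mav k F φ - Mav k G φ := by
  rw [Mav_line, Mav_line, Mav_line, ← mul_sub]
  congr 1
  exact intervalIntegral.integral_sub
    ((hF.comp (cont_line k φ)).intervalIntegrable _ _)
    ((hG.comp (cont_line k φ)).intervalIntegrable _ _)

lemma Mfold_cons (k : Fin n) (L : List (Fin n)) (g : (Fin n → ℝ) → ℝ) :
    Mfold (k :: L) g = Mav k (Mfold L g) := rfl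

lemma Mfold_contDiff (L : List (Fin n)) {g : (Fin n → ℝ) → ℝ} (hg : ContDiff ℝ 1 g) :
    ContDiff ℝ 1 (Mfold L g) := by
  induction L with
  | nil => exact hg
  | cons k L ih => exact Mav_contDiff ih k

lemma aD_Mfold (L : List (Fin n)) {G : (Fin n → ℝ) → ℝ} (hG : ContDiff ℝ 1 G) (j : Fin n) :
    aD j (Mfold L G) = Mfold L (aD j G) := by
  induction L with
  | nil => rfl
  | cons k L ih =>
    funext φ
    rw [Mfold_cons, aD_Mav (Mfold_contDiff L hG), ih, Mfold_cons]

lemma Mfold_sub (L : List (Fin n)) {F G : (Fin n → ℝ) → ℝ}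
    (hF : ContDiff ℝ 1 F) (hG : ContDiff ℝ 1 G) :
    Mfold L (fun ψ => F ψ - G ψ) = fun φ => Mfold L F φ - Mfold L G φ := by
  induction L with
  | nil => rfl
  | cons k L ih =>
    funext φ
    rw [Mfold_cons, ih, Mav_sub (Mfold_contDiff L hF).continuous
      (Mfold_contDiff L hG).continuous, Mfold_cons, Mfold_cons]

lemma Mfold_append (L : List (Fin n)) (k : Fin n) (g : (Fin n → ℝ) → ℝ) :
    Mfold (L ++ [k]) g = Mfold L (Mav k g) := by
  simp [Mfold, List.foldr_append]

/-- Integration by parts: `L_l (∂_l g) = g - M_l g` for periodic `g`. -/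
lemma Lav_aD {g : (Fin n → ℝ) → ℝ} (hg : ContDiff ℝ 1 g) (l : Fin n)
    (hper : ∀ φ, g (update φ l (φ l + 2 * π)) = g φ) (φ : Fin n → ℝ) :
    Lav l (aD l g) φ = g φ - Mav l g φ := by
  have hgd : Differentiable ℝ g := hg.differentiable one_ne_zero
  have hfd : Continuous (fderiv ℝ g) := hg.continuous_fderiv one_ne_zero
  have h2π : (0:ℝ) < 2 * π := by positivity
  set u : ℝ → ℝ := fun t => g (φ + t • e l) with hu_def
  have hu : ∀ t ∈ Set.uIcc (0:ℝ) (2 * π), HasDerivAt u (aD l g (φ + t • e l)) t := by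
    intro t _
    rw [aD_eq hgd]
    exact line_hasDerivAt hgd φ l t
  have hid : ∀ t ∈ Set.uIcc (0:ℝ) (2 * π), HasDerivAt (fun x : ℝ => x) (1:ℝ) t :=
    fun t _ => hasDerivAt_id t
  have hcont : Continuous (fun t : ℝ => aD l g (φ + t • e l)) := by
    have : (fun t : ℝ => aD l g (φ + t • e l)) =
        fun t : ℝ => fderiv ℝ g (φ + t • e l) (e l) := funext fun t => aD_eq hgd l _
    rw [this]
    exact (hfd.comp (cont_line l φ)).clm_apply
      (continuous_const : Continuous fun _ : ℝ => e l)
  have hibp := intervalIntegral.integral_mul_deriv_eq_deriv_mul hid hu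
    (intervalIntegrable_const)
    (hcont.intervalIntegrable _ _)
  -- hibp : ∫ x in 0..2π, x * aD l g (φ + x • e l)
  --      = 2π * u 2π - 0 * u 0 - ∫ x in 0..2π, 1 * u x
  have hu2π : u (2 * π) = g φ := by
    rw [hu_def]
    have := hper φ
    rwa [updeq] at this
  have hLav : Lav l (aD l g) φ =
      (2 * π)⁻¹ * ∫ t in (0:ℝ)..(2 * π), t * aD l g (φ + t • e l) := by
    simp [Lav, updeq]
  rw [hLav, hibp, hu2π, Mav_line]
  simp only [one_mul, zero_mul, sub_zero]
  field_simp
  ring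

end MoserAux

open MoserAux

/-- Filtering `finRange` by `val < m`: successor step. -/
lemma filt_succ : ∀ {n : ℕ} (m : ℕ) (hm : m < n),
    (List.finRange n).filter (fun i => decide (i.val < m + 1)) =
    (List.finRange n).filter (fun i => decide (i.val < m)) ++ [⟨m, hm⟩] := by
  intro n
  induction n with
  | zero => intro m hm; omega
  | succ n ih =>
    intro m hm
    rw [List.finRange_succ_last, List.filter_append, List.filter_append,
      List.filter_map, List.filter_map]
    by_cases hmn : m < n
    · have h1 : ((fun i : Fin (n+1) => decide (i.val < m + 1)) ∘ Fin.castSucc) =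
          fun i : Fin n => decide (i.val < m + 1) := by
        funext i; simp [Function.comp]
      have h2 : ((fun i : Fin (n+1) => decide (i.val < m)) ∘ Fin.castSucc) =
          fun i : Fin n => decide (i.val < m) := by
        funext i; simp [Function.comp]
      rw [h1, h2, ih m hmn]
      have h3 : (List.filter (fun i : Fin (n+1) => decide (i.val < m + 1)) [Fin.last n]) = [] := by
        simp [Fin.last]; omega
      have h4 : (List.filter (fun i : Fin (n+1) => decide (i.val < m)) [Fin.last n]) = [] := by
        simp [Fin.last]; omega
      rw [h3, h4]
      simp [Fin.castSucc_mk]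
    · have hmn' : m = n := by omega
      subst hmn'
      have h1 : ((fun i : Fin (m+1) => decide (i.val < m + 1)) ∘ Fin.castSucc) =
          fun i : Fin m => decide (i.val < m + 1) := by
        funext i; simp [Function.comp]
      have h2 : ((fun i : Fin (m+1) => decide (i.val < m)) ∘ Fin.castSucc) =
          fun i : Fin m => decide (i.val < m) := by
        funext i; simp [Function.comp]
      rw [h1, h2]
      have h3 : List.filter (fun i : Fin m => decide (i.val < m + 1)) (List.finRange m)
          = List.finRange m :=
        List.filter_eq_self.mpr fun x _ => by
          rw [decide_eq_true_eq]; exact Nat.lt_succ_of_lt x.isLt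
      have h4 : List.filter (fun i : Fin m => decide (i.val < m)) (List.finRange m)
          = List.finRange m :=
        List.filter_eq_self.mpr fun x _ => by rw [decide_eq_true_eq]; exact x.isLt
      have h5 : (List.filter (fun i : Fin (m+1) => decide (i.val < m + 1)) [Fin.last m])
          = [Fin.last m] := by simp [Fin.last]
      have h6 : (List.filter (fun i : Fin (m+1) => decide (i.val < m)) [Fin.last m]) = [] := by
        simp [Fin.last]
      rw [h3, h4, h5, h6]
      simp [Fin.last]

/-- **finite-dimensional Moser formula.** Let `h_1, …, h_n` be `C¹` functions
on the torus `Tⁿ` satisfying `∂h_k/∂φ_j = ∂h_j/∂φ_k` and having zero average over `Tⁿ`.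
Then `f = Σ_{l=1}^n M_1 ⋯ M_{l−1} L_l h_l` satisfies `∂f/∂φ_j = h_j` for every `j`. -/
theorem moser_formula_finite (h : Fin n → (Fin n → ℝ) → ℝ)
    (hC1 : ∀ k, ContDiff ℝ 1 (h k))
    (hper : ∀ k j (φ : Fin n → ℝ), h k (update φ j (φ j + 2 * π)) = h k φ)
    (hcompat : ∀ j k (φ : Fin n → ℝ), aD j (h k) φ = aD k (h j) φ)
    (havg : ∀ k (φ : Fin n → ℝ), Mfold (List.finRange n) (h k) φ = 0) :
    ∀ (j : Fin n) (φ : Fin n → ℝ),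
      aD j (fun ψ => ∑ l : Fin n,
        Mfold (((List.finRange n).filter fun i => i < l)) (Lav l (h l)) ψ) φ = h j φ := by
  intro j φ
  classical
  have hFl : ∀ l : Fin n,
      ContDiff ℝ 1 (Mfold ((List.finRange n).filter fun i => i < l) (Lav l (h l))) :=
    fun l => Mfold_contDiff _ (Lav_contDiff (hC1 l) l)
  -- Step 1: derivative of the sum is the sum of derivatives
  have hsum : HasDerivAt
      (fun t => ∑ l : Fin n,
        Mfold ((List.finRange n).filter fun i => i < l) (Lav l (h l)) (update φ j (φ j + t)))
      (∑ l : Fin n,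
        aD j (Mfold ((List.finRange n).filter fun i => i < l) (Lav l (h l))) φ) 0 :=
    HasDerivAt.fun_sum fun l _ => aD_hasDerivAt ((hFl l).differentiable one_ne_zero) j φ
  have step1 : aD j (fun ψ => ∑ l : Fin n,
      Mfold ((List.finRange n).filter fun i => i < l) (Lav l (h l)) ψ) φ =
      ∑ l : Fin n,
        aD j (Mfold ((List.finRange n).filter fun i => i < l) (Lav l (h l))) φ := by
    rw [aD]
    exact hsum.deriv
  rw [step1]
  -- Step 2–5: compute each summand
  have hterm : ∀ l : Fin n,
      aD j (Mfold ((List.finRange n).filter fun i => i < l) (Lav l (h l))) φ =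
      Mfold ((List.finRange n).filter fun i => i < l) (h j) φ -
      Mfold (((List.finRange n).filter fun i => i < l) ++ [l]) (h j) φ := by
    intro l
    rw [aD_Mfold _ (Lav_contDiff (hC1 l) l) j]
    have e1 : aD j (Lav l (h l)) = Lav l (aD l (h j)) := by
      have e0 : aD j (h l) = aD l (h j) := funext (hcompat j l)
      funext ψ; rw [aD_Lav (hC1 l), e0]
    have e2 : Lav l (aD l (h j)) = fun ψ => h j ψ - Mav l (h j) ψ :=
      funext fun ψ => Lav_aD (hC1 j) l (fun χ => hper j l χ) ψ
    rw [e1, e2, Mfold_sub _ (hC1 j) (Mav_contDiff (hC1 j) l), ← Mfold_append]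
  rw [Finset.sum_congr rfl fun l _ => hterm l]
  -- Step 6: telescoping sum
  have hfe : ∀ l : Fin n, ((List.finRange n).filter fun i => i < l) =
      (List.finRange n).filter fun i : Fin n => decide (i.val < l.val) :=
    fun l => List.filter_congr fun x _ => decide_eq_decide.mpr Fin.lt_def
  have ha1 : ∀ l : Fin n,
      Mfold ((List.finRange n).filter fun i => i < l) (h j) φ =
      Mfold ((List.finRange n).filter fun i : Fin n => decide (i.val < (l : ℕ))) (h j) φ := by
    intro l; rw [hfe l]
  have ha2 : ∀ l : Fin n,
      Mfold (((List.finRange n).filter fun i => i < l) ++ [l]) (h j) φ =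
      Mfold ((List.finRange n).filter fun i : Fin n => decide (i.val < (l : ℕ) + 1)) (h j) φ := by
    intro l
    rw [filt_succ (l : ℕ) l.isLt, hfe l]
  calc ∑ l : Fin n,
      (Mfold ((List.finRange n).filter fun i => i < l) (h j) φ -
       Mfold (((List.finRange n).filter fun i => i < l) ++ [l]) (h j) φ)
      = ∑ m ∈ Finset.range n,
        (Mfold ((List.finRange n).filter fun i : Fin n => decide (i.val < m)) (h j) φ -
         Mfold ((List.finRange n).filter fun i : Fin n => decide (i.val < m + 1)) (h j) φ) := by
        rw [← Fin.sum_univ_eq_sum_range (fun m =>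
          Mfold ((List.finRange n).filter fun i : Fin n => decide (i.val < m)) (h j) φ -
          Mfold ((List.finRange n).filter fun i : Fin n => decide (i.val < m + 1)) (h j) φ) n]
        refine Finset.sum_congr rfl fun l _ => ?_
        show _ =
          Mfold ((List.finRange n).filter fun i : Fin n => decide (i.val < (l : ℕ))) (h j) φ -
          Mfold ((List.finRange n).filter fun i : Fin n => decide (i.val < (l : ℕ) + 1)) (h j) φ
        rw [ha1 l, ha2 l]
    _ = Mfold ((List.finRange n).filter fun i : Fin n => decide (i.val < 0)) (h j) φ -
        Mfold ((List.finRange n).filter fun i : Fin n => decide (i.val < n)) (h j) φ :=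
      Finset.sum_range_sub' (fun m =>
        Mfold ((List.finRange n).filter fun i : Fin n => decide (i.val < m)) (h j) φ) n
    _ = h j φ := by
      have h0 : (List.finRange n).filter (fun i : Fin n => decide (i.val < 0)) = [] :=
        List.filter_eq_nil_iff.mpr fun x _ => by simp
      have hn : (List.finRange n).filter (fun i : Fin n => decide (i.val < n)) =
          List.finRange n :=
        List.filter_eq_self.mpr fun x _ => by rw [decide_eq_true_eq]; exact x.isLt
      rw [h0, hn, havg j φ, sub_zero]
      rfl
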